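/- Every cycle in a minimum cycle basis of a weighted graph is isometric: for any two vertices u, v on such a cycle C, C contains a shortest u-v path of G. -/

import Mathlib

open SimpleGraph

/-- The weight of a walk: sum of its edge weights. -/
def walkWeight {V : Type*} {G : SimpleGraph V} (w : Sym2 V → ℝ) {u v : V}
    (p : G.Walk u v) : ℝ :=
  (p.edges.map w).sum

/-- `p` is a shortest `u`-`v` path with respect to `w`. -/
def IsShortest {V : Type*} (G : SimpleGraph V) (w : Sym2 V → ℝ) {u v : V}
    (p : G.Walk u v) : Prop :=
  p.IsPath ∧ ∀ q : G.Walk u v, q.IsPath → walkWeight w p ≤ walkWeight w q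

/-- Shortest paths in `G` (w.r.t. `w`) are unique between every pair of vertices. -/
def UniqueShortestPaths {V : Type*} (G : SimpleGraph V) (w : Sym2 V → ℝ) : Prop :=
  ∀ (u v : V) (p q : G.Walk u v), IsShortest G w p → IsShortest G w q → p = q

/-- A cycle `c` is isometric: for any two vertices on `c`, some shortest path
between them in `G` is contained in `c`. -/
def IsIsometric {V : Type*} (G : SimpleGraph V) (w : Sym2 V → ℝ) {r : V}
    (c : G.Walk r r) : Prop :=
  ∀ u v : V, u ∈ c.support → v ∈ c.support →
    ∃ p : G.Walk u v, IsShortest G w p ∧ ∀ e ∈ p.edges, e ∈ c.edges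

variable {V : Type*} [Fintype V] [DecidableEq V]

/-- The incidence vector over GF(2) of (the edge set of) a closed walk. -/
def cycleVec {G : SimpleGraph V} (c : Σ v : V, G.Walk v v) : Sym2 V → ZMod 2 :=
  fun e => if e ∈ c.2.edges then 1 else 0

/-- The cycle space of `G`: the GF(2)-span of incidence vectors of cycles. -/
def cycleSpace (G : SimpleGraph V) : Submodule (ZMod 2) (Sym2 V → ZMod 2) :=
  Submodule.span (ZMod 2)
    {x | ∃ c : Σ v : V, G.Walk v v, c.2.IsCycle ∧ x = cycleVec c}

/-- `B` is a cycle basis of `G`: a set of cycles whose GF(2) incidence vectors form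
a basis of the cycle space. -/
def IsCycleBasis (G : SimpleGraph V) (B : Finset (Σ v : V, G.Walk v v)) : Prop :=
  (∀ c ∈ B, c.2.IsCycle) ∧
  LinearIndependent (ZMod 2) (fun c : B => cycleVec c.1) ∧
  Submodule.span (ZMod 2) (Set.range fun c : B => cycleVec c.1) = cycleSpace G

/-- The total weight of a set of cycles. -/
def basisWeight (w : Sym2 V → ℝ) {G : SimpleGraph V}
    (B : Finset (Σ v : V, G.Walk v v)) : ℝ :=
  ∑ c ∈ B, walkWeight w c.2


set_option linter.unusedSectionVars false
set_option maxHeartbeats 1000000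

section aux
variable {V : Type*} {G : SimpleGraph V} {w : Sym2 V → ℝ}

lemma walkWeight_nonneg (hw : ∀ e, 0 ≤ w e) {u v : V} (p : G.Walk u v) :
    0 ≤ walkWeight w p := by
  apply List.sum_nonneg
  intro x hx
  obtain ⟨e, _, rfl⟩ := List.mem_map.mp hx
  exact hw e

lemma walkWeight_append {u v x : V} (p : G.Walk u v) (q : G.Walk v x) :
    walkWeight w (p.append q) = walkWeight w p + walkWeight w q := by
  simp [walkWeight, Walk.edges_append]

lemma walkWeight_eq_of_perm {u v x y : V} {p : G.Walk u v} {q : G.Walk x y}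
    (h : List.Perm p.edges q.edges) : walkWeight w p = walkWeight w q :=
  List.Perm.sum_eq (h.map w)

lemma walkWeight_reverse {u v : V} (p : G.Walk u v) :
    walkWeight w p.reverse = walkWeight w p :=
  walkWeight_eq_of_perm (by rw [Walk.edges_reverse]; exact List.reverse_perm _)

lemma walkWeight_eq_sum_toFinset [DecidableEq V] {u v : V} {p : G.Walk u v}
    (hp : p.edges.Nodup) : walkWeight w p = ∑ e ∈ p.edges.toFinset, w e :=
  (List.sum_toFinset w hp).symm

/-- existence of a minimum-weight path -/
lemma exists_isShortest [Fintype V] [DecidableEq V] {u v : V} (q : G.Walk u v)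
    (hq : q.IsPath) :
    ∃ p : G.Walk u v, p.IsPath ∧ (∀ r : G.Walk u v, r.IsPath → walkWeight w p ≤ walkWeight w r)
      := by
  classical
  haveI : DecidableRel G.Adj := Classical.decRel _
  have hne : (Finset.univ : Finset (G.Path u v)).Nonempty := ⟨⟨q, hq⟩, Finset.mem_univ _⟩
  obtain ⟨p, _, hp⟩ := Finset.exists_min_image Finset.univ
    (fun p : G.Path u v => walkWeight w p.1) hne
  exact ⟨p.1, p.2, fun r hr => hp ⟨r, hr⟩ (Finset.mem_univ _)⟩

end aux


section MCB
variable {V : Type*} [Fintype V] [DecidableEq V] {G : SimpleGraph V}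

def parityVec {G : SimpleGraph V} {a b : V} (p : G.Walk a b) : Sym2 V → ZMod 2 :=
  fun e => (p.edges.count e : ZMod 2)

lemma no_closing_edge {a x : V} (p : G.Walk a x) (hp : p.IsPath) (hl : 2 ≤ p.length)
    (he : s(x, a) ∈ p.edges) : False := by
  cases p with
  | nil => simp at hl
  | @cons _ b _ h' q =>
    rw [Walk.cons_isPath_iff] at hp
    rw [Walk.edges_cons, List.mem_cons] at he
    rcases he with he | he
    · rw [Sym2.eq_iff] at he
      rcases he with ⟨rfl, rfl⟩ | ⟨rfl, -⟩
      · exact hp.2 q.end_mem_support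
      · cases q with
        | nil => simp at hl
        | @cons _ c _ h'' q' =>
          rw [Walk.cons_isPath_iff] at hp
          exact hp.1.2 q'.end_mem_support
    · exact hp.2 (q.snd_mem_support_of_mem_edges he)

lemma parity_decomp : ∀ (n : ℕ) {x : V} (W : G.Walk x x), W.length ≤ n →
    ∃ L : List (Σ v : V, G.Walk v v),
      (∀ D ∈ L, D.2.IsCycle ∧ ∀ e ∈ D.2.edges, e ∈ W.edges) ∧
      ∀ e, parityVec W e = (L.map (fun D => cycleVec D e)).sum := by
  intro n
  induction n with
  | zero =>
    intro x W hW
    rw [Nat.le_zero, ← Walk.length_edges, List.length_eq_zero_iff] at hW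
    exact ⟨[], by simp, fun e => by simp [parityVec, hW]⟩
  | succ n IH =>
    intro x W hW
    cases W with
    | nil => exact ⟨[], by simp, fun e => by simp [parityVec]⟩
    | @cons _ y _ h R =>
      by_cases hnd : R.support.Nodup
      · -- tail nodup case
        have hRpath : R.IsPath := Walk.IsPath.mk' hnd
        rcases lt_or_ge R.length 2 with hR2 | hR2
        · -- R.length ≤ 1
          cases R with
          | nil => exact absurd h G.irrefl
          | @cons _ c _ h' q =>
            cases q with
            | nil =>
              refine ⟨[], by simp, fun e => ?_⟩
              simp only [parityVec, Walk.edges_cons, Walk.edges_nil, List.map_nil, List.sum_nil]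
              have hsw : s(y, x) = s(x, y) := Sym2.eq_swap
              by_cases he : e = s(x, y)
              · subst he
                rw [List.count_cons, List.count_cons, List.count_nil, hsw]
                simp only [beq_self_eq_true, if_true]
                decide
              · rw [List.count_cons, List.count_cons, List.count_nil, hsw,
                  if_neg (fun hh => he (beq_iff_eq.mp hh).symm)]
                simp
            | cons h'' q' => simp [Walk.length_cons] at hR2
        · -- W is a cycle
          have hne : s(x, y) ∉ R.edges := fun hmem => no_closing_edge R hRpath hR2 hmem
          have hcyc : (Walk.cons h R).IsCycle :=
            (Walk.cons_isCycle_iff R h).mpr ⟨hRpath, hne⟩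
          refine ⟨[⟨x, Walk.cons h R⟩], by simp [hcyc], fun e => ?_⟩
          simp only [List.map_cons, List.map_nil, List.sum_cons, List.sum_nil, add_zero]
          show ((Walk.cons h R).edges.count e : ZMod 2) = if e ∈ (Walk.cons h R).edges then 1 else 0
          by_cases hmem : e ∈ (Walk.cons h R).edges
          · rw [List.count_eq_one_of_mem hcyc.isTrail.edges_nodup hmem, if_pos hmem]
            simp
          · rw [List.count_eq_zero_of_not_mem hmem, if_neg hmem]
            simp
      · -- duplicate vertex: split
        obtain ⟨a, ha⟩ := List.exists_duplicate_iff_not_nodup.mpr hnd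
        rw [List.duplicate_iff_two_le_count] at ha
        have haW : a ∈ (Walk.cons h R).support := by
          rw [Walk.support_cons]
          exact List.mem_cons_of_mem _ (List.count_pos_iff.mp (by omega))
        have hperm : List.Perm ((Walk.cons h R).rotate a haW).edges (Walk.cons h R).edges :=
          (Walk.rotate_edges _ _ haW).perm
        have hlen : ((Walk.cons h R).rotate a haW).length = (Walk.cons h R).length := by
          rw [← Walk.length_edges, ← Walk.length_edges]
          exact hperm.length_eq
        have hcount : 2 ≤ ((Walk.cons h R).rotate a haW).support.tail.count a := by
          have := (Walk.support_rotate (Walk.cons h R) a haW).perm.count_eq a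
          rw [this, Walk.support_cons, List.tail_cons]
          exact ha
        cases hWeq : (Walk.cons h R).rotate a haW with
        | nil =>
          rw [hWeq] at hlen
          simp [Walk.length_cons] at hlen
        | @cons _ b _ h2 R2 =>
          rw [hWeq, Walk.support_cons, List.tail_cons] at hcount
          have haR2 : a ∈ R2.support := List.count_pos_iff.mp (by omega)
          have hsplit : (Walk.cons h R).rotate a haW
              = (Walk.cons h2 (R2.takeUntil a haR2)).append (R2.dropUntil a haR2) := by
            rw [hWeq, Walk.cons_append, Walk.take_spec]
          have hB1len : 1 ≤ (R2.dropUntil a haR2).length := by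
            by_contra hB
            push_neg at hB
            have htail0 : (R2.dropUntil a haR2).support.tail.length = 0 := by
              have := Walk.length_support (R2.dropUntil a haR2)
              have := List.length_tail (l := (R2.dropUntil a haR2).support)
              omega
            have hcnt1 : (R2.takeUntil a haR2).support.count a = 1 :=
              Walk.count_support_takeUntil_eq_one R2 haR2
            have hsupp : R2.support
                = (R2.takeUntil a haR2).support ++ (R2.dropUntil a haR2).support.tail := by
              conv_lhs => rw [← Walk.take_spec R2 haR2]
              rw [Walk.support_append]
            rw [hsupp, List.count_append, hcnt1] at hcount
            have := List.count_le_length (a := a) (l := (R2.dropUntil a haR2).support.tail)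
            omega
          have hA1len : (Walk.cons h2 (R2.takeUntil a haR2)).length
              + (R2.dropUntil a haR2).length ≤ n + 1 := by
            have h1 := congrArg Walk.length hsplit
            rw [Walk.length_append] at h1
            omega
          obtain ⟨LA, hLA, hpA⟩ := IH (Walk.cons h2 (R2.takeUntil a haR2))
            (by rw [Walk.length_cons] at hA1len ⊢; omega)
          obtain ⟨LB, hLB, hpB⟩ := IH (R2.dropUntil a haR2)
            (by rw [Walk.length_cons] at hA1len; omega)
          refine ⟨LA ++ LB, ?_, fun e => ?_⟩
          · intro D hD
            rw [List.mem_append] at hD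
            have hmemW' : ∀ e ∈ D.2.edges, e ∈ (Walk.cons h R).edges := by
              intro e heD
              rw [← hperm.mem_iff, hsplit, Walk.edges_append, List.mem_append]
              rcases hD with hD | hD
              · exact Or.inl ((hLA D hD).2 e heD)
              · exact Or.inr ((hLB D hD).2 e heD)
            rcases hD with hD | hD
            · exact ⟨(hLA D hD).1, hmemW'⟩
            · exact ⟨(hLB D hD).1, hmemW'⟩
          · have hc : (Walk.cons h R).edges.count e
                = (Walk.cons h2 (R2.takeUntil a haR2)).edges.count e
                  + (R2.dropUntil a haR2).edges.count e := by
              rw [← hperm.count_eq, hsplit, Walk.edges_append, List.count_append]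
            show ((Walk.cons h R).edges.count e : ZMod 2) = _
            rw [hc, Nat.cast_add, List.map_append, List.sum_append]
            rw [← hpA e, ← hpB e]
            rfl


lemma mem_tail_of_mem_support_closed {r v : V} (c : G.Walk r r) (hne : ¬c.Nil)
    (hv : v ∈ c.support) : v ∈ c.support.tail := by
  cases c with
  | nil => simp at hne
  | cons h p =>
    simp only [Walk.support_cons, List.tail_cons]
    rw [Walk.support_cons, List.mem_cons] at hv
    rcases hv with rfl | hv
    · exact p.end_mem_support
    · exact hv

lemma cycle_arcs {r u v : V} (c : G.Walk r r) (hc : c.IsCycle) (hu : u ∈ c.support)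
    (hv : v ∈ c.support) (huv : u ≠ v) :
    ∃ (P1 : G.Walk u v) (P2 : G.Walk v u), P1.IsPath ∧ P2.IsPath ∧
      List.Perm c.edges (P1.edges ++ P2.edges) := by
  have hc1 : (c.rotate u hu).IsCycle := hc.rotate hu
  have hv1 : v ∈ (c.rotate u hu).support := by
    refine List.mem_of_mem_tail ?_
    rw [(Walk.support_rotate c u hu).mem_iff]
    exact mem_tail_of_mem_support_closed c (fun hn => hc.not_nil hn) hv
  set c1 := c.rotate u hu with hc1def
  have hsupp : c1.support
      = (c1.takeUntil v hv1).support ++ (c1.dropUntil v hv1).support.tail := by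
    conv_lhs => rw [← Walk.take_spec c1 hv1]
    rw [Walk.support_append]
  have hP1 : (c1.takeUntil v hv1).support = u :: (c1.takeUntil v hv1).support.tail :=
    Walk.support_eq_cons _
  have hP2 : (c1.dropUntil v hv1).support = v :: (c1.dropUntil v hv1).support.tail :=
    Walk.support_eq_cons _
  have htail : c1.support.tail
      = (c1.takeUntil v hv1).support.tail ++ (c1.dropUntil v hv1).support.tail := by
    have h := hsupp
    rw [hP1, List.cons_append] at h
    simpa using congrArg List.tail h
  have hnd := hc1.support_nodup
  rw [htail, List.nodup_append] at hnd
  obtain ⟨hnd1, hnd2, hdisj⟩ := hnd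
  have huP2 : u ∈ (c1.dropUntil v hv1).support.tail := by
    have := Walk.end_mem_support (c1.dropUntil v hv1)
    rw [hP2, List.mem_cons] at this
    rcases this with h | h
    · exact absurd h huv
    · exact h
  have hvP1 : v ∈ (c1.takeUntil v hv1).support.tail := by
    have := Walk.end_mem_support (c1.takeUntil v hv1)
    rw [hP1, List.mem_cons] at this
    rcases this with h | h
    · exact absurd h.symm huv
    · exact h
  refine ⟨c1.takeUntil v hv1, c1.dropUntil v hv1, ?_, ?_, ?_⟩
  · refine ⟨hc1.isTrail.takeUntil hv1, ?_⟩
    rw [hP1, List.nodup_cons]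
    exact ⟨fun hmem => hdisj u hmem u huP2 rfl, hnd1⟩
  · refine ⟨hc1.isTrail.dropUntil hv1, ?_⟩
    rw [hP2, List.nodup_cons]
    exact ⟨fun hmem => hdisj v hvP1 v hmem rfl, hnd2⟩
  · have h1 : List.Perm c.edges c1.edges := ((Walk.rotate_edges c u hu).symm).perm
    have h2 : c1.edges = (c1.takeUntil v hv1).edges ++ (c1.dropUntil v hv1).edges := by
      conv_lhs => rw [← Walk.take_spec c1 hv1]
      rw [Walk.edges_append]
    rw [← h2]; exact h1


lemma pi_list_sum_apply {α M : Type*} [AddCommMonoid M] (e : α) (L : List (α → M)) :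
    L.sum e = (L.map (fun f => f e)).sum := by
  induction L with
  | nil => rfl
  | cons a l ih => simp [List.sum_cons, ih]

lemma char2_add_self {M : Type*} [AddCommMonoid M] [Module (ZMod 2) M] (y : M) :
    y + y = 0 := by
  have h := add_smul (1 : ZMod 2) 1 y
  rw [one_smul] at h
  rw [← h]
  have h2 : (1 + 1 : ZMod 2) = 0 := by decide
  rw [h2, zero_smul]

lemma vec_mem_cycleSpace {G : SimpleGraph V} {D : Σ v : V, G.Walk v v} (hD : D.2.IsCycle) :
    cycleVec D ∈ cycleSpace G :=
  Submodule.subset_span ⟨D, hD, rfl⟩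

lemma walkWeight_eq_sum_toFinset' {G : SimpleGraph V} {w : Sym2 V → ℝ} {u v : V}
    {p : G.Walk u v} (hp : p.edges.Nodup) : walkWeight w p = ∑ e ∈ p.edges.toFinset, w e :=
  (List.sum_toFinset w hp).symm

lemma exchange (G : SimpleGraph V) (w : Sym2 V → ℝ) (hw : ∀ e, 0 ≤ w e)
    (B : Finset (Σ v : V, G.Walk v v)) (hB : IsCycleBasis G B)
    (C : Σ v : V, G.Walk v v) (hC : C ∈ B) {z : V} (W : G.Walk z z)
    (hWw : ∑ e ∈ W.edges.toFinset, w e < walkWeight w C.2)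
    (hne : parityVec W ∉
      Submodule.span (ZMod 2) (cycleVec '' (↑(B.erase C) : Set (Σ v : V, G.Walk v v))))
    (hmin : ∀ B' : Finset (Σ v : V, G.Walk v v),
      IsCycleBasis G B' → basisWeight w B ≤ basisWeight w B') :
    False := by
  classical
  set S : Submodule (ZMod 2) (Sym2 V → ZMod 2) :=
    Submodule.span (ZMod 2) (cycleVec '' (↑(B.erase C) : Set (Σ v : V, G.Walk v v))) with hS
  obtain ⟨L, hL, hpar⟩ := parity_decomp W.length W le_rfl
  have hparfun : parityVec W = (L.map cycleVec).sum := by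
    funext e
    rw [hpar e, pi_list_sum_apply, List.map_map]
    rfl
  -- some cycle in the decomposition avoids S
  have hexD : ∃ D ∈ L, cycleVec D ∉ S := by
    by_contra hall
    push_neg at hall
    apply hne
    rw [hparfun]
    exact list_sum_mem (fun x hx => by
      obtain ⟨D, hD, rfl⟩ := List.mem_map.mp hx
      exact hall D hD)
  obtain ⟨D, hDL, hDS⟩ := hexD
  obtain ⟨hDcyc, hDedges⟩ := hL D hDL
  -- weight of D
  have hwD : walkWeight w D.2 < walkWeight w C.2 := by
    rw [walkWeight_eq_sum_toFinset' hDcyc.isTrail.edges_nodup]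
    refine lt_of_le_of_lt ?_ hWw
    refine Finset.sum_le_sum_of_subset_of_nonneg ?_ (fun e _ _ => hw e)
    intro e he
    rw [List.mem_toFinset] at he ⊢
    exact hDedges e he
  have hDnotin : D ∉ B.erase C := fun hmem =>
    hDS (Submodule.subset_span (Set.mem_image_of_mem _ (by exact_mod_cast hmem)))
  -- cycleSpace = span (insert (cycleVec C) (image of erase))
  have hspanB := hB.2.2
  have himg : (Set.range fun c : ↥B => cycleVec c.1)
      = cycleVec '' (↑B : Set (Σ v : V, G.Walk v v)) := (Set.image_eq_range _ _).symm
  have hBset : (↑B : Set (Σ v : V, G.Walk v v))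
      = insert C (↑(B.erase C) : Set (Σ v : V, G.Walk v v)) := by
    rw [← Finset.insert_erase hC]
    simp
  have hcs : cycleSpace G
      = Submodule.span (ZMod 2)
          (insert (cycleVec C) (cycleVec '' (↑(B.erase C) : Set (Σ v : V, G.Walk v v)))) := by
    rw [← hspanB, himg, hBset, Set.image_insert_eq]
  -- decompose cycleVec D
  have hDmem : cycleVec D ∈ cycleSpace G := vec_mem_cycleSpace hDcyc
  rw [hcs, Submodule.mem_span_insert] at hDmem
  obtain ⟨α, y, hy, heq⟩ := hDmem
  have hα : α = 1 := by
    have hz : ∀ b : ZMod 2, b ≠ 0 → b = 1 := by decide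
    apply hz
    intro h0
    rw [h0, zero_smul, zero_add] at heq
    exact hDS (heq ▸ hy)
  rw [hα, one_smul] at heq
  have hCeq : cycleVec C = cycleVec D + y := by
    rw [heq, add_assoc, char2_add_self, add_zero]
  -- the new basis
  set B' : Finset (Σ v : V, G.Walk v v) := insert D (B.erase C) with hB'
  have hcyc' : ∀ c ∈ B', c.2.IsCycle := by
    intro c hc
    rw [hB', Finset.mem_insert] at hc
    rcases hc with rfl | hc
    · exact hDcyc
    · exact hB.1 c (Finset.mem_of_mem_erase hc)
  have himg' : (Set.range fun c : ↥B' => cycleVec c.1)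
      = cycleVec '' (↑B' : Set (Σ v : V, G.Walk v v)) := (Set.image_eq_range _ _).symm
  have hspan' :
      Submodule.span (ZMod 2) (Set.range fun c : ↥B' => cycleVec c.1) = cycleSpace G := by
    rw [himg']
    apply le_antisymm
    · rw [Submodule.span_le]
      rintro x ⟨c, hc, rfl⟩
      exact vec_mem_cycleSpace (hcyc' c (by exact_mod_cast hc))
    · rw [hcs, Submodule.span_le]
      have hsub : (↑(B.erase C) : Set (Σ v : V, G.Walk v v)) ⊆ ↑B' := by
        intro x hx
        rw [hB']
        exact_mod_cast Finset.mem_insert_of_mem (by exact_mod_cast hx)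
      intro x hx
      rcases hx with rfl | hx
      · rw [hCeq]
        refine Submodule.add_mem _ ?_ ?_
        · exact Submodule.subset_span
            (Set.mem_image_of_mem _ (by exact_mod_cast Finset.mem_insert_self D (B.erase C)))
        · exact Submodule.span_mono (Set.image_mono hsub) hy
      · exact Submodule.subset_span (Set.image_mono hsub hx)
  -- linear independence via dimension count
  have hmemB : ∀ c : ↥B, cycleVec c.1 ∈ cycleSpace G :=
    fun c => vec_mem_cycleSpace (hB.1 c.1 c.2)
  have hmemB' : ∀ c : ↥B', cycleVec c.1 ∈ cycleSpace G :=
    fun c => vec_mem_cycleSpace (hcyc' c.1 c.2)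
  set g : ↥B → cycleSpace G := fun c => ⟨cycleVec c.1, hmemB c⟩ with hg
  set g' : ↥B' → cycleSpace G := fun c => ⟨cycleVec c.1, hmemB' c⟩ with hg'
  have hinj := Submodule.injective_subtype (cycleSpace G)
  have hip : ∀ (I : Finset (Σ v : V, G.Walk v v)) (f : ↥I → cycleSpace G),
      (∀ c, (f c : Sym2 V → ZMod 2) = cycleVec c.1) →
      Submodule.span (ZMod 2) (Set.range fun c : ↥I => cycleVec c.1) = cycleSpace G →
      Submodule.span (ZMod 2) (Set.range f) = ⊤ := by
    intro I f hf hsp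
    apply Submodule.map_injective_of_injective hinj
    rw [Submodule.map_span, Submodule.map_subtype_top, ← Set.range_comp]
    have hfe : (⇑(cycleSpace G).subtype ∘ f) = fun c : ↥I => cycleVec c.1 := funext hf
    rw [hfe, hsp]
  have htopB : Submodule.span (ZMod 2) (Set.range g) = ⊤ := hip B g (fun c => rfl) hspanB
  have htopB' : Submodule.span (ZMod 2) (Set.range g') = ⊤ := hip B' g' (fun c => rfl) hspan'
  have hliB : LinearIndependent (ZMod 2) g := by
    apply LinearIndependent.of_comp (cycleSpace G).subtype
    exact hB.2.1
  let bas : Module.Basis ↥B (ZMod 2) (cycleSpace G) := Module.Basis.mk hliB htopB.ge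
  have hrank : Module.finrank (ZMod 2) (cycleSpace G) = Fintype.card ↥B :=
    Module.finrank_eq_card_basis bas
  have hcard2 : B'.card = B.card := by
    rw [hB', Finset.card_insert_of_notMem hDnotin, Finset.card_erase_of_mem hC]
    have : 0 < B.card := Finset.card_pos.mpr ⟨C, hC⟩
    omega
  have hcard : Fintype.card ↥B' = Module.finrank (ZMod 2) (cycleSpace G) := by
    rw [hrank, Fintype.card_coe, Fintype.card_coe, hcard2]
  have hliB' : LinearIndependent (ZMod 2) g' :=
    linearIndependent_of_top_le_span_of_card_eq_finrank htopB'.ge hcard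
  have hliB'amb : LinearIndependent (ZMod 2) (fun c : ↥B' => cycleVec c.1) := by
    have := hliB'.map' (cycleSpace G).subtype (Submodule.ker_subtype _)
    exact this
  have hB'basis : IsCycleBasis G B' := ⟨hcyc', hliB'amb, hspan'⟩
  -- weight contradiction
  have hW' := hmin B' hB'basis
  have hsum : basisWeight w B' = walkWeight w D.2 + ∑ c ∈ B.erase C, walkWeight w c.2 := by
    rw [hB', basisWeight, Finset.sum_insert hDnotin]
  have hsum2 : ∑ c ∈ B.erase C, walkWeight w c.2 + walkWeight w C.2 = basisWeight w B :=
    Finset.sum_erase_add B _ hC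
  rw [hsum] at hW'
  have : basisWeight w B < basisWeight w B := by linarith
  exact lt_irrefl _ this


lemma parity_count_of_nodup {a b : V} {p : G.Walk a b} (h : p.edges.Nodup) (e : Sym2 V) :
    ((p.edges.count e : ZMod 2)) = if e ∈ p.edges then 1 else 0 := by
  by_cases hmem : e ∈ p.edges
  · rw [List.count_eq_one_of_mem h hmem, if_pos hmem]
    simp
  · rw [List.count_eq_zero_of_not_mem hmem, if_neg hmem]
    simp

end MCB

/-- Every cycle in a minimum cycle basis of a weighted graph is isometric: for any two
vertices `u`, `v` on such a cycle `C`, `C` contains a shortest `u`-`v` path of `G`. -/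
theorem minimumCycleBasis_isometric
    (G : SimpleGraph V) (w : Sym2 V → ℝ) (hw : ∀ e, 0 ≤ w e)
    (B : Finset (Σ v : V, G.Walk v v))
    (hB : IsCycleBasis G B)
    (hmin : ∀ B' : Finset (Σ v : V, G.Walk v v),
      IsCycleBasis G B' → basisWeight w B ≤ basisWeight w B') :
    ∀ c ∈ B, IsIsometric G w c.2 := by
  classical
  intro c hc
  intro u v hu hv
  have hcyc : c.2.IsCycle := hB.1 c hc
  by_cases huv : u = v
  · subst huv
    refine ⟨Walk.nil, ⟨Walk.IsPath.nil, fun q hq => ?_⟩, by simp⟩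
    simpa [walkWeight] using walkWeight_nonneg hw q
  · obtain ⟨P1, P2, hP1, hP2, hperm⟩ := cycle_arcs c.2 hcyc hu hv huv
    have hP1c : ∀ e ∈ P1.edges, e ∈ c.2.edges := fun e he =>
      hperm.mem_iff.mpr (List.mem_append.mpr (Or.inl he))
    have hP2c : ∀ e ∈ P2.edges, e ∈ c.2.edges := fun e he =>
      hperm.mem_iff.mpr (List.mem_append.mpr (Or.inr he))
    obtain ⟨p, hp, hpmin⟩ := exists_isShortest P1 hP1
    by_contra hno
    push_neg at hno
    have hgt : ∀ (q : G.Walk u v), q.IsPath → (∀ e ∈ q.edges, e ∈ c.2.edges) →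
        walkWeight w p < walkWeight w q := by
      intro q hq hqe
      have hnotshort : ¬ IsShortest G w q := fun hs => by
        obtain ⟨e, he, hec⟩ := hno q hs
        exact hec (hqe e he)
      rw [IsShortest] at hnotshort
      push_neg at hnotshort
      obtain ⟨r, hr, hrlt⟩ := hnotshort hq
      exact lt_of_le_of_lt (hpmin r hr) hrlt
    have h1 : walkWeight w p < walkWeight w P1 := hgt P1 hP1 hP1c
    have h2 : walkWeight w p < walkWeight w P2 := by
      have := hgt P2.reverse hP2.reverse (fun e he => hP2c e (by
        rwa [Walk.edges_reverse, List.mem_reverse] at he))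
      rwa [walkWeight_reverse] at this
    have hCw : walkWeight w c.2 = walkWeight w P1 + walkWeight w P2 := by
      unfold walkWeight
      rw [List.Perm.sum_eq (hperm.map w), List.map_append, List.sum_append]
    -- the two closed walks
    set W1 := P1.append p.reverse with hW1
    set W2 := p.append P2 with hW2
    have hsplitvec : ∀ e, cycleVec c e = parityVec W1 e + parityVec W2 e := by
      intro e
      have hx : cycleVec c e = ((c.2.edges.count e : ZMod 2)) := by
        rw [parity_count_of_nodup hcyc.isTrail.edges_nodup]
        rfl
      rw [hx, hperm.count_eq, List.count_append]
      show _ = ((W1.edges.count e : ZMod 2)) + ((W2.edges.count e : ZMod 2))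
      rw [hW1, hW2, Walk.edges_append, Walk.edges_append, List.count_append,
        List.count_append, Walk.edges_reverse, List.count_reverse]
      push_cast
      have hpp : ((p.edges.count e : ZMod 2)) + ((p.edges.count e : ZMod 2)) = 0 :=
        char2_add_self _
      linear_combination -hpp
    -- cycleVec c is not in the span of the others
    set S : Submodule (ZMod 2) (Sym2 V → ZMod 2) :=
      Submodule.span (ZMod 2) (cycleVec '' (↑(B.erase c) : Set (Σ v : V, G.Walk v v))) with hS
    have hCnot : cycleVec c ∉ S := by
      have hli := hB.2.1
      have himg : cycleVec '' (↑(B.erase c) : Set (Σ v : V, G.Walk v v))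
          = (fun d : ↥B => cycleVec d.1) '' {d : ↥B | d.1 ≠ c} := by
        ext x
        constructor
        · rintro ⟨d, hd, rfl⟩
          rw [Finset.mem_coe, Finset.mem_erase] at hd
          exact ⟨⟨d, hd.2⟩, hd.1, rfl⟩
        · rintro ⟨⟨d, hd⟩, hdne, rfl⟩
          exact ⟨d, Finset.mem_coe.mpr (Finset.mem_erase.mpr ⟨hdne, hd⟩), rfl⟩
      rw [hS, himg]
      exact hli.notMem_span_image (x := ⟨c, hc⟩) (fun h => h rfl)
    have hcases : parityVec W1 ∉ S ∨ parityVec W2 ∉ S := by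
      by_contra hcon
      push_neg at hcon
      apply hCnot
      have : cycleVec c = parityVec W1 + parityVec W2 := funext hsplitvec
      rw [this]
      exact Submodule.add_mem _ hcon.1 hcon.2
    -- weight bounds
    have hsumle : ∀ {a b : V} (q1 : G.Walk u a) (q2 : G.Walk a b)
        (h1 : q1.edges.Nodup) (h2 : q2.edges.Nodup),
        ∑ e ∈ (q1.append q2).edges.toFinset, w e ≤ walkWeight w q1 + walkWeight w q2 := by
      intro a b q1 q2 hn1 hn2
      have hsub : (q1.append q2).edges.toFinset ⊆ q1.edges.toFinset ∪ q2.edges.toFinset := by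
        intro e he
        rw [List.mem_toFinset, Walk.edges_append, List.mem_append] at he
        rw [Finset.mem_union, List.mem_toFinset, List.mem_toFinset]
        exact he
      refine le_trans (Finset.sum_le_sum_of_subset_of_nonneg hsub (fun e _ _ => hw e)) ?_
      have hui := Finset.sum_union_inter (s₁ := q1.edges.toFinset) (s₂ := q2.edges.toFinset)
        (f := w)
      have hint : 0 ≤ ∑ e ∈ q1.edges.toFinset ∩ q2.edges.toFinset, w e :=
        Finset.sum_nonneg (fun e _ => hw e)
      rw [walkWeight_eq_sum_toFinset' hn1, walkWeight_eq_sum_toFinset' hn2]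
      linarith
    have hprev : p.reverse.edges.Nodup := by
      rw [Walk.edges_reverse]
      exact List.nodup_reverse.mpr hp.isTrail.edges_nodup
    have hwrev : walkWeight w p.reverse = walkWeight w p := walkWeight_reverse p
    rcases hcases with hcase | hcase
    · refine exchange G w hw B hB c hc W1 ?_ hcase hmin
      have := hsumle P1 p.reverse hP1.isTrail.edges_nodup hprev
      rw [hwrev] at this
      rw [hCw]
      calc ∑ e ∈ W1.edges.toFinset, w e ≤ walkWeight w P1 + walkWeight w p := this
        _ < walkWeight w P1 + walkWeight w P2 := by linarith
    · refine exchange G w hw B hB c hc W2 ?_ hcase hmin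
      have := hsumle p P2 hp.isTrail.edges_nodup hP2.isTrail.edges_nodup
      rw [hCw]
      calc ∑ e ∈ W2.edges.toFinset, w e ≤ walkWeight w p + walkWeight w P2 := this
        _ < walkWeight w P1 + walkWeight w P2 := by linarith
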